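/- arXiv:2508.16082 — 2 statements merged into one kernel-verified Lean document; each statement's English description precedes it below -/
import Mathlib

section
/- Let p ∈ ℝ^n be a probability vector, i.e., p_i ≥ 0 for all i and Σ_{i=1}^n p_i = 1. Then for every x ∈ ℝ^n with ‖x‖₂ = 1, it holds that Σ_{i=1}^n p_i x_i² − (Σ_{i=1}^n p_i x_i)² ≤ 1/2. Equivalently, the operator norm of the positive semidefinite matrix diag(p) − p p^T is at most 1/2. -/
noncomputable section

private lemma var_bound {n : ℕ} (p x : Fin n → ℝ) (hp : ∀ i, 0 ≤ p i)
    (hsum : ∑ i, p i = 1) :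
    ∑ i, p i * x i ^ 2 - (∑ i, p i * x i) ^ 2 ≤ (∑ i, x i ^ 2) / 2 := by
  have hn : (Finset.univ : Finset (Fin n)).Nonempty := by
    rcases (Finset.univ : Finset (Fin n)).eq_empty_or_nonempty with h | h
    · rw [h] at hsum; simp at hsum
    · exact h
  obtain ⟨i₀, -, hmax⟩ := Finset.exists_max_image Finset.univ x hn
  obtain ⟨i₁, -, hmin⟩ := Finset.exists_min_image Finset.univ x hn
  set s : ℝ := ∑ i, p i * x i with hs
  set c : ℝ := (x i₀ + x i₁) / 2 with hc
  set D : ℝ := ((x i₀ - x i₁) / 2) ^ 2 with hD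
  have expand : ∑ i, p i * (x i - c) ^ 2
      = ∑ i, p i * x i ^ 2 - 2 * c * s + c ^ 2 := by
    have h1 : ∀ i ∈ Finset.univ, p i * (x i - c) ^ 2
        = p i * x i ^ 2 - 2 * c * (p i * x i) + c ^ 2 * p i := fun i _ => by ring
    rw [Finset.sum_congr rfl h1, Finset.sum_add_distrib, Finset.sum_sub_distrib,
      ← Finset.mul_sum, ← Finset.mul_sum, hsum, mul_one]
  have step1 : ∑ i, p i * x i ^ 2 - s ^ 2 ≤ ∑ i, p i * (x i - c) ^ 2 := by
    rw [expand]; nlinarith [sq_nonneg (s - c)]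
  have step2 : ∑ i, p i * (x i - c) ^ 2 ≤ D := by
    calc ∑ i, p i * (x i - c) ^ 2 ≤ ∑ i, p i * D := by
          refine Finset.sum_le_sum fun i _ => ?_
          have h1 : x i ≤ x i₀ := hmax i (Finset.mem_univ i)
          have h2 : x i₁ ≤ x i := hmin i (Finset.mem_univ i)
          have : (x i - c) ^ 2 ≤ D := by
            rw [hD]
            apply sq_le_sq'
            · rw [hc]; linarith
            · rw [hc]; linarith
          exact mul_le_mul_of_nonneg_left this (hp i)
      _ = D := by rw [← Finset.sum_mul, hsum, one_mul]
  have step3 : D ≤ (∑ i, x i ^ 2) / 2 := by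
    by_cases hii : i₀ = i₁
    · have : D = 0 := by rw [hD, hii]; ring
      rw [this]
      positivity
    · have hsub : x i₀ ^ 2 + x i₁ ^ 2 ≤ ∑ i, x i ^ 2 := by
        have := Finset.sum_le_sum_of_subset_of_nonneg
          (Finset.subset_univ ({i₀, i₁} : Finset (Fin n)))
          (fun i _ _ => sq_nonneg (x i))
        rwa [Finset.sum_pair hii] at this
      rw [hD]; nlinarith [sq_nonneg (x i₀ + x i₁)]
  linarith

private lemma norm_sq_bound {n : ℕ} (p x : Fin n → ℝ) (hp : ∀ i, 0 ≤ p i)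
    (hsum : ∑ i, p i = 1) :
    ∑ i, (p i * (x i - ∑ j, p j * x j)) ^ 2 ≤ (∑ i, x i ^ 2) / 4 := by
  set s : ℝ := ∑ j, p j * x j with hs
  set u : Fin n → ℝ := fun i => p i * (x i - s) with hu
  set su : ℝ := ∑ j, p j * u j with hsu
  have h0 : ∑ i, p i * (x i - s) = 0 := by
    have : ∀ i ∈ Finset.univ, p i * (x i - s) = p i * x i - s * p i := fun i _ => by ring
    rw [Finset.sum_congr rfl this, Finset.sum_sub_distrib, ← Finset.mul_sum, hsum]
    ring
  -- the centered cross term equals ∑ u²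
  have e1 : ∑ i, p i * ((x i - s) * (u i - su)) = ∑ i, u i ^ 2 := by
    have : ∀ i ∈ Finset.univ, p i * ((x i - s) * (u i - su))
        = u i ^ 2 - su * (p i * (x i - s)) := fun i _ => by rw [hu]; ring
    rw [Finset.sum_congr rfl this, Finset.sum_sub_distrib, ← Finset.mul_sum, h0]
    ring
  -- Cauchy-Schwarz with weights p
  have cs : (∑ i, p i * ((x i - s) * (u i - su))) ^ 2
      ≤ (∑ i, p i * (x i - s) ^ 2) * (∑ i, p i * (u i - su) ^ 2) := by
    have := Finset.sum_mul_sq_le_sq_mul_sq Finset.univ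
      (fun i => Real.sqrt (p i) * (x i - s)) (fun i => Real.sqrt (p i) * (u i - su))
    have ha : ∀ i ∈ Finset.univ, (Real.sqrt (p i) * (x i - s)) * (Real.sqrt (p i) * (u i - su))
        = p i * ((x i - s) * (u i - su)) := fun i _ => by
      rw [mul_mul_mul_comm, Real.mul_self_sqrt (hp i)]
    have hb : ∀ i ∈ Finset.univ, (Real.sqrt (p i) * (x i - s)) ^ 2 = p i * (x i - s) ^ 2 :=
      fun i _ => by rw [mul_pow, Real.sq_sqrt (hp i)]
    have hcx : ∀ i ∈ Finset.univ, (Real.sqrt (p i) * (u i - su)) ^ 2 = p i * (u i - su) ^ 2 :=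
      fun i _ => by rw [mul_pow, Real.sq_sqrt (hp i)]
    rwa [Finset.sum_congr rfl ha, Finset.sum_congr rfl hb, Finset.sum_congr rfl hcx] at this
  have qx : ∑ i, p i * (x i - s) ^ 2 = ∑ i, p i * x i ^ 2 - s ^ 2 := by
    have : ∀ i ∈ Finset.univ, p i * (x i - s) ^ 2
        = p i * x i ^ 2 - 2 * s * (p i * x i) + s ^ 2 * p i := fun i _ => by ring
    rw [Finset.sum_congr rfl this, Finset.sum_add_distrib, Finset.sum_sub_distrib,
      ← Finset.mul_sum, ← Finset.mul_sum, hsum, ← hs]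
    ring
  have qu : ∑ i, p i * (u i - su) ^ 2 = ∑ i, p i * u i ^ 2 - su ^ 2 := by
    have : ∀ i ∈ Finset.univ, p i * (u i - su) ^ 2
        = p i * u i ^ 2 - 2 * su * (p i * u i) + su ^ 2 * p i := fun i _ => by ring
    rw [Finset.sum_congr rfl this, Finset.sum_add_distrib, Finset.sum_sub_distrib,
      ← Finset.mul_sum, ← Finset.mul_sum, hsum, ← hsu]
    ring
  have bx : ∑ i, p i * x i ^ 2 - s ^ 2 ≤ (∑ i, x i ^ 2) / 2 := var_bound p x hp hsum
  have bu : ∑ i, p i * u i ^ 2 - su ^ 2 ≤ (∑ i, u i ^ 2) / 2 := var_bound p u hp hsum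
  have qxnn : 0 ≤ ∑ i, p i * (x i - s) ^ 2 :=
    Finset.sum_nonneg fun i _ => mul_nonneg (hp i) (sq_nonneg _)
  have qunn : 0 ≤ ∑ i, p i * (u i - su) ^ 2 :=
    Finset.sum_nonneg fun i _ => mul_nonneg (hp i) (sq_nonneg _)
  have U_nn : 0 ≤ ∑ i, u i ^ 2 := Finset.sum_nonneg fun i _ => sq_nonneg _
  have X_nn : 0 ≤ ∑ i, x i ^ 2 := Finset.sum_nonneg fun i _ => sq_nonneg _
  have key : (∑ i, u i ^ 2) ^ 2 ≤ (∑ i, x i ^ 2) / 2 * ((∑ i, u i ^ 2) / 2) := by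
    have h1 : (∑ i, u i ^ 2) ^ 2
        ≤ (∑ i, p i * (x i - s) ^ 2) * (∑ i, p i * (u i - su) ^ 2) := by
      rw [← e1]; exact cs
    have h2 : (∑ i, p i * (x i - s) ^ 2) * (∑ i, p i * (u i - su) ^ 2)
        ≤ (∑ i, x i ^ 2) / 2 * ((∑ i, u i ^ 2) / 2) :=
      mul_le_mul (by rw [qx]; exact bx) (by rw [qu]; exact bu) qunn (by linarith)
    linarith
  have goal' : ∑ i, u i ^ 2 ≤ (∑ i, x i ^ 2) / 4 := by
    rcases eq_or_lt_of_le U_nn with h | h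
    · rw [← h]; positivity
    · nlinarith
  exact goal'

/-- For a probability vector `p`, the quadratic form of `diag(p) − p pᵀ` on unit
vectors is at most `1/2`; equivalently the operator norm of `diag(p) − p pᵀ`
is at most `1/2`. -/
theorem softmax_hessian_bound {n : ℕ} (p : Fin n → ℝ)
    (hp : ∀ i, 0 ≤ p i) (hsum : ∑ i, p i = 1) :
    (∀ x : EuclideanSpace ℝ (Fin n), ‖x‖ = 1 →
      ∑ i, p i * (x i) ^ 2 - (∑ i, p i * x i) ^ 2 ≤ 1 / 2) ∧
    ‖LinearMap.toContinuousLinearMap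
        (Matrix.toEuclideanLin (Matrix.diagonal p - Matrix.vecMulVec p p))‖ ≤ 1 / 2 := by
  constructor
  · intro x hx
    have hxs : ∑ i, (x i) ^ 2 = 1 := by
      have h := EuclideanSpace.norm_eq x
      rw [hx] at h
      have := Real.sqrt_eq_one.mp h.symm
      simpa [Real.norm_eq_abs, sq_abs] using this
    have := var_bound p (fun i => x i) hp hsum
    rw [hxs] at this
    simpa using this
  · apply ContinuousLinearMap.opNorm_le_bound _ (by norm_num)
    intro x
    have happ : ∀ i, (Matrix.toEuclideanLin (Matrix.diagonal p - Matrix.vecMulVec p p) x) i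
        = p i * (x i - ∑ j, p j * x j) := by
      intro i
      rw [Matrix.toEuclideanLin_apply]
      simp only [PiLp.toLp_apply, Matrix.sub_mulVec, Pi.sub_apply,
        Matrix.mulVec_diagonal]
      have hv : Matrix.mulVec (Matrix.vecMulVec p p) (WithLp.ofLp x) i
          = p i * ∑ j, p j * x j := by
        simp [Matrix.vecMulVec_apply, Matrix.mulVec, dotProduct, Finset.mul_sum,
          mul_assoc]
      rw [hv]; ring
    rw [EuclideanSpace.norm_eq, EuclideanSpace.norm_eq]
    have hnb : ∑ i, (p i * (x i - ∑ j, p j * x j)) ^ 2 ≤ (∑ i, (x i) ^ 2) / 4 := by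
      simpa using norm_sq_bound p (fun i => x i) hp hsum
    have X_nn : (0:ℝ) ≤ ∑ i, (x i) ^ 2 := Finset.sum_nonneg fun i _ => sq_nonneg _
    calc Real.sqrt (∑ i, ‖(LinearMap.toContinuousLinearMap
          (Matrix.toEuclideanLin (Matrix.diagonal p - Matrix.vecMulVec p p)) x) i‖ ^ 2)
        = Real.sqrt (∑ i, (p i * (x i - ∑ j, p j * x j)) ^ 2) := by
          congr 1
          refine Finset.sum_congr rfl fun i _ => ?_
          rw [LinearMap.coe_toContinuousLinearMap', happ i, Real.norm_eq_abs, sq_abs]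
      _ ≤ Real.sqrt ((∑ i, (x i) ^ 2) / 4) := Real.sqrt_le_sqrt hnb
      _ = Real.sqrt (∑ i, (x i) ^ 2) / 2 := by
          rw [Real.sqrt_div X_nn, show Real.sqrt 4 = 2 by
            rw [show (4:ℝ) = 2 ^ 2 by norm_num, Real.sqrt_sq (by norm_num : (0:ℝ) ≤ 2)]]
      _ = 1 / 2 * Real.sqrt (∑ i, ‖x i‖ ^ 2) := by
          simp only [Real.norm_eq_abs, sq_abs]
          ring

end
end

section
/- Consider a depth-L feed-forward network with activation φ, where φ is differentiable with |φ'(u)| ≤ β_φ and |φ(u)| ≤ β_φ|u| for all u ∈ ℝ. Suppose ‖x‖₂ ≤ M_x, ‖W^(ℓ)‖₂ ≤ s_ℓ for every layer ℓ, and let y be any class label. Then for each layer index r ∈ {1, …, L}, the gradient of the map W^(r) ↦ −log(softmax(f_θ(x))_y) (all other weights held fixed) has norm at most √2 · M_x · β_φ^{L−1} · Π_{ℓ≠r} s_ℓ. -/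
noncomputable section

/-- View a vectorized weight `w ∈ ℝ^{m×n}` as a matrix. -/
def toMat {m n : ℕ} (w : EuclideanSpace ℝ (Fin m × Fin n)) : Matrix (Fin m) (Fin n) ℝ :=
  Matrix.of fun i j => w (i, j)

/-- Spectral (ℓ²-operator) norm of a vectorized weight matrix. -/
def specNorm {m n : ℕ} (w : EuclideanSpace ℝ (Fin m × Fin n)) : ℝ :=
  ‖LinearMap.toContinuousLinearMap (Matrix.toEuclideanLin (toMat w))‖

/-- Hidden activations of a feed-forward network:
`a^(0) = x`, `a^(ℓ+1) = φ(W^(ℓ+1) a^(ℓ))` entrywise. -/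
def hiddenW (φ : ℝ → ℝ) (dims : ℕ → ℕ)
    (W : ∀ ℓ : ℕ, EuclideanSpace ℝ (Fin (dims (ℓ + 1)) × Fin (dims ℓ)))
    (x : EuclideanSpace ℝ (Fin (dims 0))) :
    (ℓ : ℕ) → EuclideanSpace ℝ (Fin (dims ℓ))
  | 0 => x
  | ℓ + 1 => WithLp.toLp 2 (fun i => φ (∑ j, W ℓ (i, j) * hiddenW φ dims W x ℓ j))

/-- The logits of a depth-`Lhid + 1` feed-forward network: `z = W^(L) a^(L−1)`. -/
def logitsW (φ : ℝ → ℝ) (dims : ℕ → ℕ) (Lhid : ℕ)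
    (W : ∀ ℓ : ℕ, EuclideanSpace ℝ (Fin (dims (ℓ + 1)) × Fin (dims ℓ)))
    (x : EuclideanSpace ℝ (Fin (dims 0))) :
    EuclideanSpace ℝ (Fin (dims (Lhid + 1))) :=
  WithLp.toLp 2 (fun i => ∑ j, W Lhid (i, j) * hiddenW φ dims W x Lhid j)

/-- Cross-entropy loss of the logits `z` with label `y`: `−log(softmax(z)_y)`. -/
def crossEntropy {K : ℕ} (z : EuclideanSpace ℝ (Fin K)) (y : Fin K) : ℝ :=
  -Real.log (Real.exp (z y) / ∑ k, Real.exp (z k))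

/-! ### Auxiliary lemmas -/

lemma specNorm_nonneg {m n : ℕ} (w : EuclideanSpace ℝ (Fin m × Fin n)) : 0 ≤ specNorm w :=
  norm_nonneg _

lemma sum_sq_eq_norm_sq {ι : Type*} [Fintype ι] (v : EuclideanSpace ℝ ι) :
    ∑ i, v i ^ 2 = ‖v‖ ^ 2 := by
  rw [EuclideanSpace.norm_eq, Real.sq_sqrt (by positivity)]
  simp [Real.norm_eq_abs, sq_abs]

lemma euclid_norm_le {ι : Type*} [Fintype ι] (u : EuclideanSpace ℝ ι) {c : ℝ}
    (hc : 0 ≤ c) (h : ∑ i, u i ^ 2 ≤ c ^ 2) : ‖u‖ ≤ c := by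
  rw [EuclideanSpace.norm_eq]
  calc Real.sqrt (∑ i, ‖u i‖ ^ 2) = Real.sqrt (∑ i, u i ^ 2) := by
        simp [Real.norm_eq_abs, sq_abs]
    _ ≤ Real.sqrt (c ^ 2) := Real.sqrt_le_sqrt h
    _ = c := Real.sqrt_sq hc

lemma norm_le_mul_of_abs_le {ι : Type*} [Fintype ι] {u v : EuclideanSpace ℝ ι} {c : ℝ}
    (hc : 0 ≤ c) (h : ∀ i, |u i| ≤ c * |v i|) : ‖u‖ ≤ c * ‖v‖ := by
  refine euclid_norm_le u (by positivity) ?_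
  have : ∑ i, u i ^ 2 ≤ ∑ i, c ^ 2 * v i ^ 2 := by
    refine Finset.sum_le_sum fun i _ => ?_
    calc u i ^ 2 = |u i| ^ 2 := (sq_abs _).symm
      _ ≤ (c * |v i|) ^ 2 := pow_le_pow_left₀ (abs_nonneg _) (h i) 2
      _ = c ^ 2 * v i ^ 2 := by rw [mul_pow, sq_abs]
  calc ∑ i, u i ^ 2 ≤ c ^ 2 * ∑ i, v i ^ 2 := by rwa [Finset.mul_sum]
    _ = c ^ 2 * ‖v‖ ^ 2 := by rw [sum_sq_eq_norm_sq]
    _ = (c * ‖v‖) ^ 2 := (mul_pow _ _ _).symm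

lemma mulVec_spec_bound {m n : ℕ} (w : EuclideanSpace ℝ (Fin m × Fin n))
    (v : EuclideanSpace ℝ (Fin n)) (u : EuclideanSpace ℝ (Fin m))
    (hu : ∀ i, u i = ∑ j, w (i, j) * v j) :
    ‖u‖ ≤ specNorm w * ‖v‖ := by
  have h : u = LinearMap.toContinuousLinearMap (Matrix.toEuclideanLin (toMat w)) v := by
    ext i
    rw [hu i]
    simp [Matrix.toEuclideanLin_apply, Matrix.mulVec, dotProduct, toMat]
  rw [h]
  exact (LinearMap.toContinuousLinearMap (Matrix.toEuclideanLin (toMat w))).le_opNorm v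

lemma mulVec_frob_bound {m n : ℕ} (w : EuclideanSpace ℝ (Fin m × Fin n))
    (v : EuclideanSpace ℝ (Fin n)) (u : EuclideanSpace ℝ (Fin m))
    (hu : ∀ i, u i = ∑ j, w (i, j) * v j) :
    ‖u‖ ≤ ‖w‖ * ‖v‖ := by
  refine euclid_norm_le u (by positivity) ?_
  have key : ∀ i, u i ^ 2 ≤ (∑ j, w (i, j) ^ 2) * ∑ j, v j ^ 2 := by
    intro i
    rw [hu i]
    exact Finset.sum_mul_sq_le_sq_mul_sq _ _ _
  calc ∑ i, u i ^ 2 ≤ ∑ i, (∑ j, w (i, j) ^ 2) * ∑ j, v j ^ 2 :=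
        Finset.sum_le_sum fun i _ => key i
    _ = (∑ i, ∑ j, w (i, j) ^ 2) * ∑ j, v j ^ 2 := by rw [← Finset.sum_mul]
    _ = (∑ p : Fin m × Fin n, w p ^ 2) * ∑ j, v j ^ 2 := by rw [Fintype.sum_prod_type]
    _ = ‖w‖ ^ 2 * ‖v‖ ^ 2 := by rw [sum_sq_eq_norm_sq, sum_sq_eq_norm_sq]
    _ = (‖w‖ * ‖v‖) ^ 2 := (mul_pow _ _ _).symm

/-! ### Network estimates -/

section net

variable (φ : ℝ → ℝ) (dims : ℕ → ℕ)
    (W : ∀ ℓ : ℕ, EuclideanSpace ℝ (Fin (dims (ℓ + 1)) × Fin (dims ℓ)))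
    (x : EuclideanSpace ℝ (Fin (dims 0)))
    (βφ Mx : ℝ) (s : ℕ → ℝ)

lemma phi_lip (hφ : Differentiable ℝ φ) (hφ' : ∀ u : ℝ, |deriv φ u| ≤ βφ) (a b : ℝ) :
    |φ a - φ b| ≤ βφ * |a - b| := by
  have := convex_univ.norm_image_sub_le_of_norm_deriv_le
    (fun u _ => hφ u) (fun u _ => hφ' u) (Set.mem_univ b) (Set.mem_univ a)
  simpa [Real.norm_eq_abs] using this

lemma hidden_norm_le (hβ : 0 ≤ βφ)
    (hφ0 : ∀ u : ℝ, |φ u| ≤ βφ * |u|) (hx : ‖x‖ ≤ Mx) :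
    ∀ ℓ : ℕ, (∀ j < ℓ, specNorm (W j) ≤ s j) →
      ‖hiddenW φ dims W x ℓ‖ ≤ Mx * βφ ^ ℓ * ∏ j ∈ Finset.range ℓ, s j := by
  intro ℓ
  induction ℓ with
  | zero => intro _; simpa [hiddenW] using hx
  | succ n ih =>
    intro hs
    have hsn : specNorm (W n) ≤ s n := hs n (Nat.lt_succ_self n)
    have ihn := ih (fun j hj => hs j (hj.trans (Nat.lt_succ_self n)))
    set a : EuclideanSpace ℝ (Fin (dims n)) := hiddenW φ dims W x n with ha
    set u : EuclideanSpace ℝ (Fin (dims (n + 1))) := WithLp.toLp 2 (fun i => ∑ j, W n (i, j) * a j) with husingle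
    have h1 : ‖hiddenW φ dims W x (n + 1)‖ ≤ βφ * ‖u‖ := by
      refine norm_le_mul_of_abs_le hβ fun i => ?_
      have : hiddenW φ dims W x (n + 1) i = φ (u i) := by simp [hiddenW, husingle, ha]
      rw [this]
      exact hφ0 (u i)
    have h2 : ‖u‖ ≤ specNorm (W n) * ‖a‖ := mulVec_spec_bound _ _ _ (fun i => rfl)
    have h3 : ‖a‖ ≤ Mx * βφ ^ n * ∏ j ∈ Finset.range n, s j := ihn
    have hMx : 0 ≤ Mx := le_trans (norm_nonneg x) hx
    calc ‖hiddenW φ dims W x (n + 1)‖ ≤ βφ * ‖u‖ := h1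
      _ ≤ βφ * (specNorm (W n) * ‖a‖) := by gcongr
      _ ≤ βφ * (s n * (Mx * βφ ^ n * ∏ j ∈ Finset.range n, s j)) := by
          refine mul_le_mul_of_nonneg_left ?_ hβ
          exact mul_le_mul hsn h3 (norm_nonneg a) (le_trans (specNorm_nonneg _) hsn)
      _ = Mx * βφ ^ (n + 1) * ∏ j ∈ Finset.range (n + 1), s j := by
          rw [Finset.prod_range_succ]; ring

lemma hidden_update_eq (r : ℕ) (V : EuclideanSpace ℝ (Fin (dims (r + 1)) × Fin (dims r))) :
    ∀ ℓ ≤ r, hiddenW φ dims (Function.update W r V) x ℓ = hiddenW φ dims W x ℓ := by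
  intro ℓ
  induction ℓ with
  | zero => intro _; rfl
  | succ n ih =>
    intro hn
    have hne : n ≠ r := by omega
    have ihn := ih (by omega)
    simp only [hiddenW, ihn, Function.update_of_ne hne]

lemma hidden_diff (hβ : 0 ≤ βφ) (hφ : Differentiable ℝ φ)
    (hφ' : ∀ u : ℝ, |deriv φ u| ≤ βφ) (hφ0 : ∀ u : ℝ, |φ u| ≤ βφ * |u|)
    (hx : ‖x‖ ≤ Mx) (r : ℕ)
    (V₁ V₂ : EuclideanSpace ℝ (Fin (dims (r + 1)) × Fin (dims r))) :
    ∀ ℓ, r < ℓ → (∀ j, j < ℓ → j ≠ r → specNorm (W j) ≤ s j) →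
      ‖hiddenW φ dims (Function.update W r V₁) x ℓ
        - hiddenW φ dims (Function.update W r V₂) x ℓ‖
      ≤ Mx * βφ ^ ℓ * (∏ j ∈ (Finset.range ℓ).erase r, s j) * ‖V₁ - V₂‖ := by
  intro ℓ
  induction ℓ with
  | zero => omega
  | succ n ih =>
    intro hrn hs
    rcases Nat.lt_or_ge r n with hlt | hge
    · -- inductive step: n ≠ r
      have hne : n ≠ r := by omega
      have hsn : specNorm (W n) ≤ s n := hs n (Nat.lt_succ_self n) hne
      have ihn := ih hlt (fun j hj hjr => hs j (by omega) hjr)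
      set B₁ := hiddenW φ dims (Function.update W r V₁) x with hB₁
      set B₂ := hiddenW φ dims (Function.update W r V₂) x with hB₂
      set d : EuclideanSpace ℝ (Fin (dims n)) := B₁ n - B₂ n with hd
      set u : EuclideanSpace ℝ (Fin (dims (n + 1))) := WithLp.toLp 2 (fun i => ∑ j, W n (i, j) * d j) with hu
      have h1 : ‖B₁ (n + 1) - B₂ (n + 1)‖ ≤ βφ * ‖u‖ := by
        refine norm_le_mul_of_abs_le hβ fun i => ?_
        have e1 : (B₁ (n + 1) - B₂ (n + 1)) i = B₁ (n + 1) i - B₂ (n + 1) i := rfl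
        have e2 : B₁ (n + 1) i = φ (∑ j, W n (i, j) * B₁ n j) := by
          simp [hB₁, hiddenW, Function.update_of_ne hne]
        have e3 : B₂ (n + 1) i = φ (∑ j, W n (i, j) * B₂ n j) := by
          simp [hB₂, hiddenW, Function.update_of_ne hne]
        have e4 : u i = (∑ j, W n (i, j) * B₁ n j) - ∑ j, W n (i, j) * B₂ n j := by
          simp [hu, hd, PiLp.sub_apply, mul_sub, Finset.sum_sub_distrib]
        rw [e1, e2, e3, e4]
        exact phi_lip φ βφ hφ hφ' _ _
      have h2 : ‖u‖ ≤ specNorm (W n) * ‖d‖ := mulVec_spec_bound _ _ _ (fun i => rfl)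
      calc ‖B₁ (n + 1) - B₂ (n + 1)‖ ≤ βφ * ‖u‖ := h1
        _ ≤ βφ * (specNorm (W n) * ‖d‖) := by gcongr
        _ ≤ βφ * (s n * (Mx * βφ ^ n * (∏ j ∈ (Finset.range n).erase r, s j) * ‖V₁ - V₂‖)) := by
            refine mul_le_mul_of_nonneg_left ?_ hβ
            exact mul_le_mul hsn ihn (norm_nonneg d) (le_trans (specNorm_nonneg _) hsn)
        _ = Mx * βφ ^ (n + 1) * (∏ j ∈ (Finset.range (n + 1)).erase r, s j) * ‖V₁ - V₂‖ := by
            have : (Finset.range (n + 1)).erase r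
                = insert n ((Finset.range n).erase r) := by
              rw [Finset.range_add_one]
              exact Finset.erase_insert_of_ne hne
            rw [this, Finset.prod_insert (by simp)]
            ring
    · -- base case: n = r
      have hn : n = r := by omega
      subst hn
      have hMx : 0 ≤ Mx := le_trans (norm_nonneg x) hx
      have hA := hidden_norm_le φ dims W x βφ Mx s hβ hφ0 hx n
        (fun j hj => hs j (by omega) (by omega))
      set A : EuclideanSpace ℝ (Fin (dims n)) := hiddenW φ dims W x n with hA'
      set dV : EuclideanSpace ℝ (Fin (dims (n + 1)) × Fin (dims n)) := V₁ - V₂ with hdV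
      set u : EuclideanSpace ℝ (Fin (dims (n + 1))) := WithLp.toLp 2 (fun i => ∑ j, dV (i, j) * A j) with hu
      set B₁ := hiddenW φ dims (Function.update W n V₁) x with hB₁
      set B₂ := hiddenW φ dims (Function.update W n V₂) x with hB₂
      have h1 : ‖B₁ (n + 1) - B₂ (n + 1)‖ ≤ βφ * ‖u‖ := by
        refine norm_le_mul_of_abs_le hβ fun i => ?_
        have e1 : (B₁ (n + 1) - B₂ (n + 1)) i = B₁ (n + 1) i - B₂ (n + 1) i := rfl
        have e2 : B₁ (n + 1) i = φ (∑ j, V₁ (i, j) * A j) := by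
          simp [hB₁, hiddenW, Function.update_self, hA',
            hidden_update_eq φ dims W x n V₁ n le_rfl]
        have e3 : B₂ (n + 1) i = φ (∑ j, V₂ (i, j) * A j) := by
          simp [hB₂, hiddenW, Function.update_self, hA',
            hidden_update_eq φ dims W x n V₂ n le_rfl]
        have e4 : u i = (∑ j, V₁ (i, j) * A j) - ∑ j, V₂ (i, j) * A j := by
          simp [hu, hdV, PiLp.sub_apply, sub_mul, Finset.sum_sub_distrib]
        rw [e1, e2, e3, e4]
        exact phi_lip φ βφ hφ hφ' _ _
      have h2 : ‖u‖ ≤ ‖dV‖ * ‖A‖ := mulVec_frob_bound _ _ _ (fun i => rfl)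
      calc ‖B₁ (n + 1) - B₂ (n + 1)‖ ≤ βφ * ‖u‖ := h1
        _ ≤ βφ * (‖dV‖ * ‖A‖) := by gcongr
        _ ≤ βφ * (‖dV‖ * (Mx * βφ ^ n * ∏ j ∈ Finset.range n, s j)) := by
            refine mul_le_mul_of_nonneg_left ?_ hβ
            exact mul_le_mul_of_nonneg_left hA (norm_nonneg dV)
        _ = Mx * βφ ^ (n + 1) * (∏ j ∈ (Finset.range (n + 1)).erase n, s j) * ‖dV‖ := by
            have : (Finset.range (n + 1)).erase n = Finset.range n := by
              rw [Finset.range_add_one]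
              exact Finset.erase_insert (by simp)
            rw [this]
            ring

end net

/-! ### Cross-entropy estimates -/

section CE

variable {K : ℕ} (y : Fin K)

lemma crossEntropy_eq (z : EuclideanSpace ℝ (Fin K)) :
    crossEntropy z y = Real.log (∑ k, Real.exp (z k)) - z y := by
  have hS : (0 : ℝ) < ∑ k, Real.exp (z k) :=
    Finset.sum_pos (fun k _ => Real.exp_pos _) ⟨y, Finset.mem_univ y⟩
  rw [crossEntropy, Real.log_div (Real.exp_pos _).ne' hS.ne', Real.log_exp]
  ring

/-- derivative of CE -/
def ceDeriv (z : EuclideanSpace ℝ (Fin K)) : EuclideanSpace ℝ (Fin K) →L[ℝ] ℝ :=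
  (∑ k, Real.exp (z k))⁻¹ •
      (∑ k, Real.exp (z k) • (EuclideanSpace.proj k : EuclideanSpace ℝ (Fin K) →L[ℝ] ℝ))
    - EuclideanSpace.proj y

lemma hasFDerivAt_ce (z : EuclideanSpace ℝ (Fin K)) :
    HasFDerivAt (fun w => crossEntropy w y) (ceDeriv y z) z := by
  have hS : (0 : ℝ) < ∑ k, Real.exp (z k) :=
    Finset.sum_pos (fun k _ => Real.exp_pos _) ⟨y, Finset.mem_univ y⟩
  have h1 : HasFDerivAt (fun w : EuclideanSpace ℝ (Fin K) => ∑ k, Real.exp (w k))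
      (∑ k, Real.exp (z k) • (EuclideanSpace.proj k : EuclideanSpace ℝ (Fin K) →L[ℝ] ℝ)) z := by
    refine HasFDerivAt.fun_sum fun k _ => ?_
    have hk : HasFDerivAt (fun w : EuclideanSpace ℝ (Fin K) => w k)
        (EuclideanSpace.proj k : EuclideanSpace ℝ (Fin K) →L[ℝ] ℝ) z :=
      ContinuousLinearMap.hasFDerivAt (EuclideanSpace.proj (𝕜 := ℝ) k)
    exact (Real.hasDerivAt_exp (z k)).comp_hasFDerivAt z hk
  have h2 : HasFDerivAt (fun w : EuclideanSpace ℝ (Fin K) => Real.log (∑ k, Real.exp (w k)))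
      ((∑ k, Real.exp (z k))⁻¹ •
        (∑ k, Real.exp (z k) • (EuclideanSpace.proj k : EuclideanSpace ℝ (Fin K) →L[ℝ] ℝ))) z :=
    by have := (Real.hasDerivAt_log hS.ne').comp_hasFDerivAt z h1; exact this
  have h3 := h2.sub ((EuclideanSpace.proj y : EuclideanSpace ℝ (Fin K) →L[ℝ] ℝ)).hasFDerivAt
  have : (fun w : EuclideanSpace ℝ (Fin K) => crossEntropy w y)
      = fun w => Real.log (∑ k, Real.exp (w k)) - w y := by
    funext w; exact crossEntropy_eq y w
  rw [this]
  exact h3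

lemma ceDeriv_norm_le (z : EuclideanSpace ℝ (Fin K)) : ‖ceDeriv y z‖ ≤ Real.sqrt 2 := by
  have hS : (0 : ℝ) < ∑ k, Real.exp (z k) :=
    Finset.sum_pos (fun k _ => Real.exp_pos _) ⟨y, Finset.mem_univ y⟩
  set S := ∑ k, Real.exp (z k) with hSdef
  set p : Fin K → ℝ := fun k => Real.exp (z k) / S with hp
  have hp0 : ∀ k, 0 ≤ p k := fun k => div_nonneg (Real.exp_pos _).le hS.le
  have hpsum : ∑ k, p k = 1 := by
    rw [hp, ← Finset.sum_div, ← hSdef, div_self hS.ne']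
  have hpy1 : p y ≤ 1 := by
    rw [hp, div_le_one hS]
    exact Finset.single_le_sum (fun k _ => (Real.exp_pos (z k)).le) (Finset.mem_univ y)
  set c : EuclideanSpace ℝ (Fin K) := WithLp.toLp 2 (fun k => p k - if k = y then 1 else 0) with hc
  have hcnorm : ‖c‖ ≤ Real.sqrt 2 := by
    refine euclid_norm_le c (Real.sqrt_nonneg 2) ?_
    rw [Real.sq_sqrt (by norm_num : (0:ℝ) ≤ 2)]
    have split : ∑ k, c k ^ 2 = (p y - 1) ^ 2 + ∑ k ∈ Finset.univ.erase y, p k ^ 2 := by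
      rw [← Finset.add_sum_erase _ _ (Finset.mem_univ y)]
      congr 1
      · simp [hc]
      · refine Finset.sum_congr rfl fun k hk => ?_
        have : k ≠ y := Finset.ne_of_mem_erase hk
        simp [hc, this]
    have hrest : ∑ k ∈ Finset.univ.erase y, p k ^ 2
        ≤ (∑ k ∈ Finset.univ.erase y, p k) ^ 2 :=
      Finset.sum_sq_le_sq_sum_of_nonneg fun k _ => hp0 k
    have hsum_erase : ∑ k ∈ Finset.univ.erase y, p k = 1 - p y := by
      have := Finset.add_sum_erase Finset.univ p (Finset.mem_univ y)
      linarith [hpsum]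
    have h1py : 0 ≤ 1 - p y := by linarith
    have h1py' : 1 - p y ≤ 1 := by linarith [hp0 y]
    calc ∑ k, c k ^ 2 = (p y - 1) ^ 2 + ∑ k ∈ Finset.univ.erase y, p k ^ 2 := split
      _ ≤ (p y - 1) ^ 2 + (1 - p y) ^ 2 := by rw [hsum_erase] at hrest; linarith
      _ = 2 * (1 - p y) ^ 2 := by ring
      _ ≤ 2 * 1 := by nlinarith
      _ = 2 := by norm_num
  refine ContinuousLinearMap.opNorm_le_bound _ (Real.sqrt_nonneg 2) fun h => ?_
  have happ : ceDeriv y z h = ∑ k, c k * h k := by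
    have hrhs : ∑ k, c k * h k = (∑ k, p k * h k) - h y := by
      have : ∀ k, c k * h k = p k * h k - (if k = y then 1 else 0) * h k := by
        intro k; rw [hc]; ring
      rw [Finset.sum_congr rfl fun k _ => this k, Finset.sum_sub_distrib]
      congr 1
      simp [Finset.sum_ite_eq']
    rw [hrhs]
    simp only [ceDeriv, ContinuousLinearMap.sub_apply, ContinuousLinearMap.smul_apply,
      ContinuousLinearMap.sum_apply, PiLp.proj_apply, smul_eq_mul]
    rw [Finset.mul_sum]
    congr 1
    refine Finset.sum_congr rfl fun k _ => ?_
    rw [hp]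
    ring
  rw [happ]
  have hinner : ∑ k, c k * h k = (inner ℝ c h : ℝ) := by
    rw [PiLp.inner_apply]
    simp [RCLike.inner_apply, conj_trivial, mul_comm]
  rw [Real.norm_eq_abs, hinner]
  calc |(inner ℝ c h : ℝ)| ≤ ‖c‖ * ‖h‖ := abs_real_inner_le_norm c h
    _ ≤ Real.sqrt 2 * ‖h‖ := by gcongr

lemma crossEntropy_lip (z₁ z₂ : EuclideanSpace ℝ (Fin K)) :
    |crossEntropy z₁ y - crossEntropy z₂ y| ≤ Real.sqrt 2 * ‖z₁ - z₂‖ := by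
  have := convex_univ.norm_image_sub_le_of_norm_hasFDerivWithin_le
    (f := fun w => crossEntropy w y) (f' := fun z => ceDeriv y z)
    (fun w _ => (hasFDerivAt_ce y w).hasFDerivWithinAt)
    (fun w _ => ceDeriv_norm_le y w) (Set.mem_univ z₂) (Set.mem_univ z₁)
  simpa [Real.norm_eq_abs] using this

end CE

/-- For a depth-`L = Lhid + 1` network with `|φ'| ≤ β_φ`, `|φ(u)| ≤ β_φ|u|`,
`‖x‖₂ ≤ M_x` and spectral norms `‖W^(ℓ)‖₂ ≤ s_ℓ`, the gradient of the map
`W^(r) ↦ −log(softmax(f_θ(x))_y)` (all other weights fixed) has norm at most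
`√2 · M_x · β_φ^{L−1} · Π_{ℓ≠r} s_ℓ`. -/
theorem layer_gradient_bound (φ : ℝ → ℝ) (dims : ℕ → ℕ) (Lhid : ℕ)
    (W : ∀ ℓ : ℕ, EuclideanSpace ℝ (Fin (dims (ℓ + 1)) × Fin (dims ℓ)))
    (x : EuclideanSpace ℝ (Fin (dims 0))) (y : Fin (dims (Lhid + 1)))
    (βφ Mx : ℝ) (s : ℕ → ℝ)
    (hφ : Differentiable ℝ φ)
    (hφ' : ∀ u : ℝ, |deriv φ u| ≤ βφ)
    (hφ0 : ∀ u : ℝ, |φ u| ≤ βφ * |u|)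
    (hx : ‖x‖ ≤ Mx)
    (hW : ∀ ℓ ≤ Lhid, specNorm (W ℓ) ≤ s ℓ)
    (r : ℕ) (hr : r ≤ Lhid) :
    ‖gradient
        (fun V : EuclideanSpace ℝ (Fin (dims (r + 1)) × Fin (dims r)) =>
          crossEntropy (logitsW φ dims Lhid (Function.update W r V) x) y) (W r)‖
      ≤ Real.sqrt 2 * Mx * βφ ^ (Lhid + 1 - 1)
          * ∏ ℓ ∈ (Finset.range (Lhid + 1)).erase r, s ℓ := by
  classical
  set F : EuclideanSpace ℝ (Fin (dims (r + 1)) × Fin (dims r)) → ℝ :=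
    fun V => crossEntropy (logitsW φ dims Lhid (Function.update W r V) x) y with hF
  have hβ : 0 ≤ βφ := le_trans (abs_nonneg _) (hφ' 0)
  have hMx : 0 ≤ Mx := le_trans (norm_nonneg x) hx
  set P : ℝ := ∏ ℓ ∈ (Finset.range (Lhid + 1)).erase r, s ℓ with hP
  set C : ℝ := Mx * βφ ^ Lhid * P with hC
  have hsnn : ∀ j ∈ (Finset.range (Lhid + 1)).erase r, 0 ≤ s j := by
    intro j hj
    have hj' : j ≤ Lhid := by
      have := Finset.mem_range.mp (Finset.mem_of_mem_erase hj)
      omega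
    exact le_trans (specNorm_nonneg _) (hW j hj')
  have hP0 : 0 ≤ P := Finset.prod_nonneg hsnn
  have hC0 : 0 ≤ C := mul_nonneg (mul_nonneg hMx (pow_nonneg hβ _)) hP0
  -- Lipschitz bound on logits as a function of the layer-r weights
  have hzdiff : ∀ V₁ V₂ : EuclideanSpace ℝ (Fin (dims (r + 1)) × Fin (dims r)),
      ‖logitsW φ dims Lhid (Function.update W r V₁) x
        - logitsW φ dims Lhid (Function.update W r V₂) x‖ ≤ C * ‖V₁ - V₂‖ := by
    intro V₁ V₂
    rcases Nat.lt_or_ge r Lhid with hlt | hge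
    · -- r < Lhid
      have hne : Lhid ≠ r := by omega
      have hd := hidden_diff φ dims W x βφ Mx s hβ hφ hφ' hφ0 hx r V₁ V₂ Lhid hlt
        (fun j hj hjr => hW j (by omega))
      have hcoord : ∀ i, (logitsW φ dims Lhid (Function.update W r V₁) x
          - logitsW φ dims Lhid (Function.update W r V₂) x) i
          = ∑ j, W Lhid (i, j) * (hiddenW φ dims (Function.update W r V₁) x Lhid
              - hiddenW φ dims (Function.update W r V₂) x Lhid) j := by
        intro i
        have e1 : (logitsW φ dims Lhid (Function.update W r V₁) x
            - logitsW φ dims Lhid (Function.update W r V₂) x) i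
            = logitsW φ dims Lhid (Function.update W r V₁) x i
              - logitsW φ dims Lhid (Function.update W r V₂) x i := rfl
        rw [e1]
        simp [logitsW, Function.update_of_ne hne, PiLp.sub_apply, mul_sub,
          Finset.sum_sub_distrib]
      have h1 := mulVec_spec_bound (W Lhid)
        (hiddenW φ dims (Function.update W r V₁) x Lhid
          - hiddenW φ dims (Function.update W r V₂) x Lhid) _ hcoord
      have hspec : specNorm (W Lhid) ≤ s Lhid := hW Lhid le_rfl
      have hprod : P = s Lhid * ∏ j ∈ (Finset.range Lhid).erase r, s j := by
        rw [hP]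
        have : (Finset.range (Lhid + 1)).erase r
            = insert Lhid ((Finset.range Lhid).erase r) := by
          rw [Finset.range_add_one]
          exact Finset.erase_insert_of_ne hne
        rw [this, Finset.prod_insert (by simp)]
      calc ‖logitsW φ dims Lhid (Function.update W r V₁) x
            - logitsW φ dims Lhid (Function.update W r V₂) x‖
          ≤ specNorm (W Lhid) * ‖hiddenW φ dims (Function.update W r V₁) x Lhid
              - hiddenW φ dims (Function.update W r V₂) x Lhid‖ := h1
        _ ≤ s Lhid * (Mx * βφ ^ Lhid * (∏ j ∈ (Finset.range Lhid).erase r, s j)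
              * ‖V₁ - V₂‖) :=
            mul_le_mul hspec hd (norm_nonneg _) (le_trans (specNorm_nonneg _) hspec)
        _ = C * ‖V₁ - V₂‖ := by rw [hC, hprod]; ring
    · -- r = Lhid
      have hge' : r = Lhid := by omega
      subst hge'
      have hAeq₁ := hidden_update_eq φ dims W x r V₁ r le_rfl
      have hAeq₂ := hidden_update_eq φ dims W x r V₂ r le_rfl
      have hA := hidden_norm_le φ dims W x βφ Mx s hβ hφ0 hx r
        (fun j hj => hW j (by omega))
      have hcoord : ∀ i, (logitsW φ dims r (Function.update W r V₁) x
          - logitsW φ dims r (Function.update W r V₂) x) i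
          = ∑ j, (V₁ - V₂) (i, j) * hiddenW φ dims W x r j := by
        intro i
        have e1 : (logitsW φ dims r (Function.update W r V₁) x
            - logitsW φ dims r (Function.update W r V₂) x) i
            = logitsW φ dims r (Function.update W r V₁) x i
              - logitsW φ dims r (Function.update W r V₂) x i := rfl
        rw [e1]
        simp [logitsW, Function.update_self, hAeq₁, hAeq₂, PiLp.sub_apply, sub_mul,
          Finset.sum_sub_distrib]
      have h1 := mulVec_frob_bound (V₁ - V₂) (hiddenW φ dims W x r) _ hcoord
      have hprod : P = ∏ j ∈ Finset.range r, s j := by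
        rw [hP]
        have : (Finset.range (r + 1)).erase r = Finset.range r := by
          rw [Finset.range_add_one]
          exact Finset.erase_insert (by simp)
        rw [this]
      calc ‖logitsW φ dims r (Function.update W r V₁) x
            - logitsW φ dims r (Function.update W r V₂) x‖
          ≤ ‖V₁ - V₂‖ * ‖hiddenW φ dims W x r‖ := h1
        _ ≤ ‖V₁ - V₂‖ * (Mx * βφ ^ r * ∏ j ∈ Finset.range r, s j) :=
            mul_le_mul_of_nonneg_left hA (norm_nonneg _)
        _ = C * ‖V₁ - V₂‖ := by rw [hC, hprod]; ring
  -- Lipschitz bound on the loss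
  have hFdiff : ∀ V : EuclideanSpace ℝ (Fin (dims (r + 1)) × Fin (dims r)),
      ‖F V - F (W r)‖ ≤ (Real.sqrt 2 * C) * ‖V - W r‖ := by
    intro V
    have h1 := crossEntropy_lip y (logitsW φ dims Lhid (Function.update W r V) x)
      (logitsW φ dims Lhid (Function.update W r (W r)) x)
    have h2 := hzdiff V (W r)
    rw [hF, Real.norm_eq_abs]
    calc |crossEntropy (logitsW φ dims Lhid (Function.update W r V) x) y
          - crossEntropy (logitsW φ dims Lhid (Function.update W r (W r)) x) y|
        ≤ Real.sqrt 2 * ‖logitsW φ dims Lhid (Function.update W r V) x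
            - logitsW φ dims Lhid (Function.update W r (W r)) x‖ := h1
      _ ≤ Real.sqrt 2 * (C * ‖V - W r‖) :=
          mul_le_mul_of_nonneg_left h2 (Real.sqrt_nonneg 2)
      _ = (Real.sqrt 2 * C) * ‖V - W r‖ := by ring
  have hfd : ‖fderiv ℝ F (W r)‖ ≤ Real.sqrt 2 * C :=
    norm_fderiv_le_of_lip' ℝ (mul_nonneg (Real.sqrt_nonneg 2) hC0)
      (Filter.Eventually.of_forall hFdiff)
  have hg : ‖gradient F (W r)‖ = ‖fderiv ℝ F (W r)‖ := by
    rw [gradient]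
    exact LinearIsometryEquiv.norm_map _ _
  calc ‖gradient F (W r)‖ = ‖fderiv ℝ F (W r)‖ := hg
    _ ≤ Real.sqrt 2 * C := hfd
    _ = Real.sqrt 2 * Mx * βφ ^ (Lhid + 1 - 1) * P := by
        rw [hC]
        have h11 : Lhid + 1 - 1 = Lhid := by omega
        rw [h11]
        ring

end
end
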